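/- For probability density functions p and q and any s with 0 < s < 1/2, the relative Rényi entropy satisfies I^s(p‖q) ≤ 2(1-s) · I^{1/2}(p‖q). -/

import Mathlib

open MeasureTheory Real
open scoped ENNReal

theorem renyi_upper_bound {Ω : Type*} [MeasurableSpace Ω] (μ : Measure Ω)
    (p q : Ω → ℝ) (hp : Measurable p) (hq : Measurable q)
    (hp0 : ∀ ω, 0 ≤ p ω) (hq0 : ∀ ω, 0 ≤ q ω)
    (hpi : ∫ ω, p ω ∂μ = 1) (hqi : ∫ ω, q ω ∂μ = 1)
    (s : ℝ) (hs : 0 < s) (hs' : s < 1/2) :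
    -Real.log (∫ ω, p ω ^ s * q ω ^ (1 - s) ∂μ)
      ≤ 2 * (1 - s) * (-Real.log (∫ ω, p ω ^ (1/2 : ℝ) * q ω ^ (1/2 : ℝ) ∂μ)) := by
  have hs2 : (0:ℝ) < 1 - s := by linarith
  have ha1 : (1:ℝ) < 2 * (1 - s) := by linarith
  have ha0 : (0:ℝ) < 2 * (1 - s) := by linarith
  set a : ℝ := 2 * (1 - s) with ha_def
  -- integrability of p and q
  have hpint : Integrable p μ := by
    by_contra h
    rw [integral_undef h] at hpi; norm_num at hpi
  have hqint : Integrable q μ := by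
    by_contra h
    rw [integral_undef h] at hqi; norm_num at hqi
  -- measurability of integrands
  have hAmeas : Measurable (fun ω => p ω ^ s * q ω ^ (1 - s)) :=
    (hp.pow_const _).mul (hq.pow_const _)
  have hBmeas : Measurable (fun ω => p ω ^ (1/2:ℝ) * q ω ^ (1/2:ℝ)) :=
    (hp.pow_const _).mul (hq.pow_const _)
  -- nonnegativity of integrands
  have hAnn : ∀ ω, 0 ≤ p ω ^ s * q ω ^ (1 - s) := fun ω =>
    mul_nonneg (Real.rpow_nonneg (hp0 ω) _) (Real.rpow_nonneg (hq0 ω) _)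
  have hBnn : ∀ ω, 0 ≤ p ω ^ (1/2:ℝ) * q ω ^ (1/2:ℝ) := fun ω =>
    mul_nonneg (Real.rpow_nonneg (hp0 ω) _) (Real.rpow_nonneg (hq0 ω) _)
  -- pointwise AM-GM bounds
  have hAle : ∀ ω, p ω ^ s * q ω ^ (1 - s) ≤ s * p ω + (1 - s) * q ω := fun ω =>
    Real.geom_mean_le_arith_mean2_weighted hs.le hs2.le (hp0 ω) (hq0 ω) (by ring)
  have hBle : ∀ ω, p ω ^ (1/2:ℝ) * q ω ^ (1/2:ℝ) ≤ (1/2) * p ω + (1/2) * q ω := fun ω =>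
    Real.geom_mean_le_arith_mean2_weighted (by norm_num) (by norm_num) (hp0 ω) (hq0 ω)
      (by norm_num)
  -- integrability of integrands
  have hAint : Integrable (fun ω => p ω ^ s * q ω ^ (1 - s)) μ := by
    refine Integrable.mono' ((hpint.const_mul s).add (hqint.const_mul (1 - s)))
      hAmeas.aestronglyMeasurable (ae_of_all _ fun ω => ?_)
    rw [Real.norm_of_nonneg (hAnn ω)]; exact hAle ω
  have hBint : Integrable (fun ω => p ω ^ (1/2:ℝ) * q ω ^ (1/2:ℝ)) μ := by
    refine Integrable.mono' ((hpint.const_mul (1/2)).add (hqint.const_mul (1/2)))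
      hBmeas.aestronglyMeasurable (ae_of_all _ fun ω => ?_)
    rw [Real.norm_of_nonneg (hBnn ω)]; exact hBle ω
  set A : ℝ := ∫ ω, p ω ^ s * q ω ^ (1 - s) ∂μ with hA_def
  set B : ℝ := ∫ ω, p ω ^ (1/2:ℝ) * q ω ^ (1/2:ℝ) ∂μ with hB_def
  have hA0 : 0 ≤ A := integral_nonneg hAnn
  have hB0 : 0 ≤ B := integral_nonneg hBnn
  have hA1 : A ≤ 1 := by
    have := integral_mono hAint ((hpint.const_mul s).add (hqint.const_mul (1 - s))) hAle
    simp only [Pi.add_apply] at this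
    rwa [integral_add (hpint.const_mul s) (hqint.const_mul (1 - s)), integral_const_mul,
      integral_const_mul, hpi, hqi, mul_one, mul_one, add_sub_cancel] at this
  -- Hölder's inequality: B ≤ A ^ (1/a)
  have hkey : B ≤ A ^ (1 / a) := by
    set P : Ω → ℝ≥0∞ := fun ω => ENNReal.ofReal (p ω) with hP_def
    set Q : Ω → ℝ≥0∞ := fun ω => ENNReal.ofReal (q ω) with hQ_def
    have hPl : ∫⁻ ω, P ω ∂μ = 1 := by
      rw [hP_def, ← ofReal_integral_eq_lintegral_ofReal hpint (ae_of_all _ hp0), hpi,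
        ENNReal.ofReal_one]
    set b : ℝ := a / (a - 1) with hb_def
    have hconj : a.HolderConjugate b := Real.HolderConjugate.conjExponent ha1
    set f : Ω → ℝ≥0∞ := fun ω => P ω ^ (s / a) * Q ω ^ (1/2:ℝ) with hf_def
    set g : Ω → ℝ≥0∞ := fun ω => P ω ^ (1 / b) with hg_def
    have hfm : AEMeasurable f μ :=
      ((hp.ennreal_ofReal.pow_const _).mul (hq.ennreal_ofReal.pow_const _)).aemeasurable
    have hgm : AEMeasurable g μ := (hp.ennreal_ofReal.pow_const _).aemeasurable
    have hH := ENNReal.lintegral_mul_le_Lp_mul_Lq μ hconj hfm hgm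
    have hfg : ∀ ω, (f * g) ω = P ω ^ (1/2:ℝ) * Q ω ^ (1/2:ℝ) := by
      intro ω
      have h1 : s / a + 1 / b = 1/2 := by
        rw [hb_def, ha_def]; field_simp; ring
      simp only [Pi.mul_apply, hf_def, hg_def]
      rw [mul_right_comm, ← ENNReal.rpow_add_of_nonneg _ _ (div_nonneg hs.le ha0.le) (one_div_nonneg.mpr hconj.symm.pos.le), h1]
    have hfa : ∀ ω, f ω ^ a = P ω ^ s * Q ω ^ (1 - s) := by
      intro ω
      rw [hf_def, ENNReal.mul_rpow_of_nonneg _ _ ha0.le, ← ENNReal.rpow_mul, ← ENNReal.rpow_mul]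
      congr 1
      · congr 1; field_simp
      · congr 1; rw [ha_def]; ring
    have hgb : ∀ ω, g ω ^ b = P ω := by
      intro ω
      rw [hg_def, ← ENNReal.rpow_mul, one_div, inv_mul_cancel₀ hconj.symm.pos.ne',
        ENNReal.rpow_one]
    rw [lintegral_congr hfg, lintegral_congr hfa] at hH
    have hgb' : (∫⁻ ω, g ω ^ b ∂μ) = 1 := by rw [lintegral_congr hgb]; exact hPl
    rw [hgb', ENNReal.one_rpow, mul_one] at hH
    -- convert back to real integrals
    have hBl : ENNReal.ofReal B = ∫⁻ ω, P ω ^ (1/2:ℝ) * Q ω ^ (1/2:ℝ) ∂μ := by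
      rw [hB_def, ofReal_integral_eq_lintegral_ofReal hBint (ae_of_all _ hBnn)]
      refine lintegral_congr fun ω => ?_
      rw [ENNReal.ofReal_mul (Real.rpow_nonneg (hp0 ω) _),
        ENNReal.ofReal_rpow_of_nonneg (hp0 ω) (by norm_num),
        ENNReal.ofReal_rpow_of_nonneg (hq0 ω) (by norm_num)]
    have hAl : ENNReal.ofReal A = ∫⁻ ω, P ω ^ s * Q ω ^ (1 - s) ∂μ := by
      rw [hA_def, ofReal_integral_eq_lintegral_ofReal hAint (ae_of_all _ hAnn)]
      refine lintegral_congr fun ω => ?_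
      rw [ENNReal.ofReal_mul (Real.rpow_nonneg (hp0 ω) _),
        ENNReal.ofReal_rpow_of_nonneg (hp0 ω) hs.le,
        ENNReal.ofReal_rpow_of_nonneg (hq0 ω) hs2.le]
    rw [← hBl, ← hAl] at hH
    have := ENNReal.toReal_mono (by
      exact ENNReal.rpow_ne_top_of_nonneg (by positivity) ENNReal.ofReal_ne_top) hH
    rwa [ENNReal.toReal_ofReal hB0, ← ENNReal.toReal_rpow, ENNReal.toReal_ofReal hA0] at this
  -- conclude via logarithms
  rcases eq_or_lt_of_le hB0 with hB | hB
  · have hae : (fun ω => p ω ^ (1/2:ℝ) * q ω ^ (1/2:ℝ)) =ᵐ[μ] 0 :=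
      (integral_eq_zero_iff_of_nonneg hBnn hBint).mp hB.symm
    have hA : A = 0 := by
      rw [hA_def, ← integral_zero Ω ℝ (μ := μ)]
      refine integral_congr_ae (hae.mono fun ω hω => ?_)
      simp only [Pi.zero_apply] at hω ⊢
      rcases mul_eq_zero.mp hω with h | h
      · have : p ω = 0 := by
          by_contra hne
          exact absurd h (Real.rpow_pos_of_pos (lt_of_le_of_ne (hp0 ω) (Ne.symm hne)) _).ne'
        rw [this, Real.zero_rpow hs.ne', zero_mul]
      · have : q ω = 0 := by
          by_contra hne
          exact absurd h (Real.rpow_pos_of_pos (lt_of_le_of_ne (hq0 ω) (Ne.symm hne)) _).ne'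
        rw [this, Real.zero_rpow hs2.ne', mul_zero]
    rw [hA, ← hB, Real.log_zero, neg_zero, mul_zero]
  · have hA : 0 < A := by
      by_contra h
      push_neg at h
      have hA0' : A = 0 := le_antisymm h hA0
      rw [hA0', Real.zero_rpow (by positivity)] at hkey
      linarith
    have hlog : Real.log B ≤ (1/a) * Real.log A := by
      calc Real.log B ≤ Real.log (A ^ (1/a)) := Real.log_le_log hB hkey
        _ = (1/a) * Real.log A := Real.log_rpow hA _
    have h2 : a * Real.log B ≤ Real.log A := by
      calc a * Real.log B ≤ a * ((1/a) * Real.log A) :=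
            mul_le_mul_of_nonneg_left hlog ha0.le
        _ = Real.log A := by field_simp
    have h3 : a * -Real.log B = -(a * Real.log B) := by ring
    rw [ha_def] at h3 ⊢
    rw [← ha_def] at h3 ⊢
    linarith [h2]
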